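/- One has the inclusion NN_Q~ ⊆ 2·(PSD_Q~ − PSD_Q~), where PSD_Q~ − PSD_Q~ = {a − b : a, b ∈ PSD_Q~} is the difference body of the section PSD_Q~. -/

import Mathlib

open MeasureTheory Finset

noncomputable section

/-- The space `Q` of even quartics, represented by symmetric coefficient matrices
`a : Fin n → Fin n → ℝ` (the quartic being `∑ i j, a i j * x i ^ 2 * x j ^ 2`). -/
def symSub (n : ℕ) : Submodule ℝ (Fin n → Fin n → ℝ) where
  carrier := {a | ∀ i j, a i j = a j i}
  add_mem' := by
    intro a b ha hb i j
    simp only [Pi.add_apply, ha i j, hb i j]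
  zero_mem' := by intro i j; rfl
  smul_mem' := by
    intro c a ha i j
    simp only [Pi.smul_apply, smul_eq_mul, ha i j]

/-- The even quartic form corresponding to a symmetric coefficient matrix. -/
def qfun {n : ℕ} (a : symSub n) (x : EuclideanSpace ℝ (Fin n)) : ℝ :=
  ∑ i, ∑ j, a.1 i j * (x i)^2 * (x j)^2

/-- The element of `Q` corresponding to `r(x) = (x_1^2 + ... + x_n^2)^2`. -/
def rQ (n : ℕ) : symSub n := ⟨fun _ _ => 1, fun _ _ => rfl⟩

/-- The section `K~ = {f ∈ M : f + r ∈ K}` of a cone `K ⊆ Q`. -/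
def sect {n : ℕ} (σ : Measure (EuclideanSpace ℝ (Fin n))) (K : Set (symSub n)) :
    Set (symSub n) :=
  {a | (∫ x, qfun a x ∂σ) = 0 ∧ a + rQ n ∈ K}

/-- The volume radius of a subset of `M`, computed through a linear isometry `ψ`
of `ℝ^(dim M)` (with Lebesgue measure) onto `M`. -/
def vrad {n d : ℕ} (ψ : EuclideanSpace ℝ (Fin d) →ₗ[ℝ] symSub n)
    (C : Set (symSub n)) : ℝ :=
  ((volume (⇑ψ ⁻¹' C)).toReal /
    (volume (Metric.closedBall (0 : EuclideanSpace ℝ (Fin d)) 1)).toReal) ^ ((1:ℝ)/(d:ℝ))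

/-- `NN_Q`: even quartics with nonnegative coefficients. -/
def NNQ (n : ℕ) : Set (symSub n) :=
  {a | ∀ i j, 0 ≤ a.1 i j}

/-- `PSD_Q`: sums of squares of quadratic forms in `x_1^2, …, x_n^2`. -/
def PSDQ (n : ℕ) : Set (symSub n) :=
  {a | ∃ (k : ℕ) (c : Fin k → Fin n → ℝ),
    ∀ x : EuclideanSpace ℝ (Fin n), qfun a x = ∑ i, (∑ j, c i j * (x j)^2)^2}


/-! ### Auxiliary material -/

def rotFun (n : ℕ) (i j : Fin n) (x : EuclideanSpace ℝ (Fin n)) : EuclideanSpace ℝ (Fin n) :=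
  WithLp.toLp 2 (fun k => if k = i then (x i - x j)/Real.sqrt 2 else if k = j then (x i + x j)/Real.sqrt 2 else x k)

def rotFunInv (n : ℕ) (i j : Fin n) (x : EuclideanSpace ℝ (Fin n)) : EuclideanSpace ℝ (Fin n) :=
  WithLp.toLp 2 (fun k => if k = i then (x i + x j)/Real.sqrt 2 else if k = j then (- x i + x j)/Real.sqrt 2 else x k)

def rotLin (n : ℕ) (i j : Fin n) : EuclideanSpace ℝ (Fin n) →ₗ[ℝ] EuclideanSpace ℝ (Fin n) where
  toFun := rotFun n i j
  map_add' x y := by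
    ext k
    simp only [rotFun, PiLp.add_apply, PiLp.toLp_apply]
    split_ifs <;> ring
  map_smul' c x := by
    ext k
    simp only [rotFun, PiLp.toLp_apply, PiLp.smul_apply, RingHom.id_apply, smul_eq_mul]
    split_ifs <;> ring

def rotLinInv (n : ℕ) (i j : Fin n) : EuclideanSpace ℝ (Fin n) →ₗ[ℝ] EuclideanSpace ℝ (Fin n) where
  toFun := rotFunInv n i j
  map_add' x y := by
    ext k
    simp only [rotFunInv, PiLp.add_apply, PiLp.toLp_apply]
    split_ifs <;> ring
  map_smul' c x := by
    ext k
    simp only [rotFunInv, PiLp.toLp_apply, PiLp.smul_apply, RingHom.id_apply, smul_eq_mul]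
    split_ifs <;> ring

lemma sqrt2_sq : (Real.sqrt 2)^2 = 2 := Real.sq_sqrt (by norm_num)
lemma sqrt2_ne : (Real.sqrt 2) ≠ 0 := by positivity

lemma normsq (n : ℕ) (x : EuclideanSpace ℝ (Fin n)) : ‖x‖^2 = ∑ k, (x k)^2 := by
  rw [EuclideanSpace.norm_eq, Real.sq_sqrt (by positivity)]
  simp [Real.norm_eq_abs, sq_abs]

def rot45 (n : ℕ) (i j : Fin n) (hij : i ≠ j) :
    EuclideanSpace ℝ (Fin n) ≃ₗᵢ[ℝ] EuclideanSpace ℝ (Fin n) where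
  toLinearEquiv := LinearEquiv.ofLinear (rotLin n i j) (rotLinInv n i j)
    (by
      ext x k
      have hji : j ≠ i := Ne.symm hij
      have hne := sqrt2_ne
      simp only [LinearMap.comp_apply, LinearMap.id_coe, id_eq, rotLin, rotLinInv,
        LinearMap.coe_mk, AddHom.coe_mk, rotFun, rotFunInv, PiLp.toLp_apply]
      rcases eq_or_ne k i with rfl | hki
      · simp only [if_pos rfl, if_neg hji, ↓reduceIte]
        field_simp
        rw [sqrt2_sq]; ring
      · rcases eq_or_ne k j with rfl | hkj
        · simp only [if_pos rfl, if_neg hji, if_neg hki, ↓reduceIte]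
          field_simp
          rw [sqrt2_sq]
          ring
        · simp only [if_neg hki, if_neg hkj])
    (by
      ext x k
      have hji : j ≠ i := Ne.symm hij
      have hne := sqrt2_ne
      simp only [LinearMap.comp_apply, LinearMap.id_coe, id_eq, rotLin, rotLinInv,
        LinearMap.coe_mk, AddHom.coe_mk, rotFun, rotFunInv, PiLp.toLp_apply]
      rcases eq_or_ne k i with rfl | hki
      · simp only [if_pos rfl, if_neg hji, ↓reduceIte]
        field_simp
        rw [sqrt2_sq]; ring
      · rcases eq_or_ne k j with rfl | hkj
        · simp only [if_pos rfl, if_neg hji, if_neg hki, ↓reduceIte]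
          field_simp
          rw [sqrt2_sq]
          ring
        · simp only [if_neg hki, if_neg hkj])
  norm_map' x := by
    have hne := sqrt2_ne
    have key : ∑ k, ‖(rotFun n i j x) k‖^2 = ∑ k, ‖x k‖^2 := by
      simp only [Real.norm_eq_abs, sq_abs]
      have hz : ∀ k ∈ univ, k ∉ ({i, j} : Finset (Fin n)) →
          ((rotFun n i j x) k)^2 - (x k)^2 = 0 := by
        intro k _ hk
        simp only [mem_insert, mem_singleton, not_or] at hk
        simp [rotFun, hk.1, hk.2]
      have hsub : ∑ k, (((rotFun n i j x) k)^2 - (x k)^2) = 0 := by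
        rw [← Finset.sum_subset (Finset.subset_univ ({i,j} : Finset (Fin n))) hz,
          Finset.sum_pair hij]
        simp only [rotFun, PiLp.toLp_apply, if_pos rfl, ↓reduceIte, if_neg hij, if_neg (Ne.symm hij)]
        field_simp
        rw [sqrt2_sq]
        ring
      rw [Finset.sum_sub_distrib] at hsub
      linarith
    show ‖rotFun n i j x‖ = ‖x‖
    rw [EuclideanSpace.norm_eq, EuclideanSpace.norm_eq, key]

lemma rot45_apply_i (n : ℕ) (i j : Fin n) (hij : i ≠ j) (x : EuclideanSpace ℝ (Fin n)) :
    (rot45 n i j hij x) i = (x i - x j)/Real.sqrt 2 := by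
  simp [rot45, rotLin, rotFun, LinearEquiv.ofLinear]

lemma rot45_apply_j (n : ℕ) (i j : Fin n) (hij : i ≠ j) (x : EuclideanSpace ℝ (Fin n)) :
    (rot45 n i j hij x) j = (x i + x j)/Real.sqrt 2 := by
  simp [rot45, rotLin, rotFun, LinearEquiv.ofLinear, Ne.symm hij]

lemma mem_PSDQ_of_rep {n : ℕ} (a : symSub n) {ι : Type} [Fintype ι] (c : ι → Fin n → ℝ)
    (hr : ∀ x : EuclideanSpace ℝ (Fin n), qfun a x = ∑ i, (∑ j, c i j * (x j)^2)^2) :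
    a ∈ PSDQ n := by
  refine ⟨Fintype.card ι, fun l j => c ((Fintype.equivFin ι).symm l) j, fun x => ?_⟩
  rw [hr x]
  exact (Equiv.sum_comp (Fintype.equivFin ι).symm fun i => (∑ j, c i j * (x j)^2)^2).symm

lemma psd_rep {n : ℕ} (C : Fin n → Fin n → ℝ) (hCs : ∀ i j, C i j = C j i)
    (hC0 : ∀ i j, 0 ≤ C i j) (τ : ℝ) (hτ : 0 ≤ τ) (ε : ℝ) (hε : ε^2 = 1)
    (M : symSub n)
    (hM : ∀ k l, M.1 k l = (if k = l then ∑ j, C k j else 0)/4 + ε * C k l/4 + τ) :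
    M ∈ PSDQ n := by
  classical
  set cfun : (Fin n × Fin n) ⊕ Unit → Fin n → ℝ := Sum.elim
      (fun p k => Real.sqrt (C p.1 p.2 / 8) *
        ((if k = p.1 then 1 else 0) + ε * (if k = p.2 then 1 else 0)))
      (fun _ _ => Real.sqrt τ) with hcfun
  apply mem_PSDQ_of_rep M cfun
  intro x
  have hunit : ∀ u : Unit, (∑ j, cfun (Sum.inr u) j * (x j)^2)^2
      = τ * (∑ k, (x k)^2)^2 := by
    intro u
    simp only [hcfun, Sum.elim_inr]
    rw [← Finset.mul_sum, mul_pow, Real.sq_sqrt hτ]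
  have hpair : ∀ p : Fin n × Fin n, (∑ j, cfun (Sum.inl p) j * (x j)^2)^2
      = (C p.1 p.2 / 8) * ((x p.1)^2 + ε * (x p.2)^2)^2 := by
    intro p
    simp only [hcfun, Sum.elim_inl]
    have e : ∑ k, Real.sqrt (C p.1 p.2 / 8) *
        ((if k = p.1 then 1 else 0) + ε * (if k = p.2 then 1 else 0)) * (x k)^2
        = Real.sqrt (C p.1 p.2 / 8) * ((x p.1)^2 + ε * (x p.2)^2) := by
      simp_rw [mul_assoc]
      rw [← Finset.mul_sum]
      congr 1
      have e2 : ∀ k, ((if k = p.1 then 1 else 0) + ε * (if k = p.2 then 1 else 0)) * (x k)^2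
          = (if k = p.1 then (x k)^2 else 0) + ε * (if k = p.2 then (x k)^2 else 0) := by
        intro k; split_ifs <;> ring
      simp_rw [e2]
      rw [Finset.sum_add_distrib, Finset.sum_ite_eq' univ p.1 (fun k => (x k)^2),
        ← Finset.mul_sum, Finset.sum_ite_eq' univ p.2 (fun k => (x k)^2)]
      simp
    rw [e, mul_pow, Real.sq_sqrt (div_nonneg (hC0 _ _) (by norm_num))]
  rw [Fintype.sum_sum_type, Fintype.sum_prod_type]
  simp only [hpair, hunit]
  have hU : ∑ _u : Unit, τ * (∑ k, (x k)^2)^2 = τ * (∑ k, (x k)^2)^2 := by simp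
  rw [hU]
  have split : ∀ k l, M.1 k l * (x k)^2 * (x l)^2
      = (if k = l then (∑ j, C k j) * ((x k)^2 * (x l)^2) / 4 else 0)
        + (ε/4) * (C k l * ((x k)^2 * (x l)^2)) + τ * ((x k)^2 * (x l)^2) := by
    intro k l
    rw [hM k l]
    rcases eq_or_ne k l with rfl | hkl
    · rw [if_pos (rfl : k = k), if_pos (rfl : k = k)]; ring
    · simp only [if_neg hkl]; ring
  show ∑ k, ∑ l, M.1 k l * (x k)^2 * (x l)^2 = _
  simp_rw [split]
  simp only [Finset.sum_add_distrib]
  have p1 : ∑ k, ∑ l, (if k = l then (∑ j, C k j) * ((x k)^2 * (x l)^2) / 4 else 0)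
      = ∑ k, (∑ j, C k j) * ((x k)^2)^2 / 4 := by
    apply Finset.sum_congr rfl
    intro k _
    rw [Finset.sum_ite_eq univ k (fun l => (∑ j, C k j) * ((x k)^2 * (x l)^2) / 4),
      if_pos (Finset.mem_univ k)]
    ring
  have p2 : ∑ k, ∑ l, (ε/4) * (C k l * ((x k)^2 * (x l)^2))
      = (ε/4) * ∑ k, ∑ l, C k l * ((x k)^2 * (x l)^2) := by
    simp_rw [← Finset.mul_sum]
  have p3 : ∑ k, ∑ l, τ * ((x k)^2 * (x l)^2) = τ * (∑ k, (x k)^2)^2 := by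
    conv_rhs => rw [sq, Finset.sum_mul_sum, Finset.mul_sum]
    apply Finset.sum_congr rfl
    intro k _
    rw [Finset.mul_sum]
  rw [p1, p2, p3]
  have q1 : ∀ i j : Fin n, (C i j / 8) * ((x i)^2 + ε * (x j)^2)^2
      = (C i j / 8) * ((x i)^2)^2 + (ε/4) * (C i j * ((x i)^2 * (x j)^2))
        + (C i j / 8) * ((x j)^2)^2 := by
    intro i j
    linear_combination (C i j / 8 * ((x j)^2)^2) * hε
  simp_rw [q1]
  simp only [Finset.sum_add_distrib]
  have r1 : ∑ i, ∑ j, (C i j / 8) * ((x i)^2)^2 = ∑ i, (∑ j, C i j) * ((x i)^2)^2 / 8 := by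
    apply Finset.sum_congr rfl
    intro i _
    rw [Finset.sum_mul, Finset.sum_div]
    apply Finset.sum_congr rfl
    intro j _; ring
  have r2 : ∑ i, ∑ j, (ε/4) * (C i j * ((x i)^2 * (x j)^2))
      = (ε/4) * ∑ i, ∑ j, C i j * ((x i)^2 * (x j)^2) := by
    simp_rw [← Finset.mul_sum]
  have r3 : ∑ i, ∑ j, (C i j / 8) * ((x j)^2)^2 = ∑ i, (∑ j, C i j) * ((x i)^2)^2 / 8 := by
    rw [Finset.sum_comm]
    apply Finset.sum_congr rfl
    intro j _
    rw [Finset.sum_mul, Finset.sum_div]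
    apply Finset.sum_congr rfl
    intro i _
    rw [hCs i j]
    ring
  rw [r1, r2, r3]
  have fin : ∑ k, (∑ j, C k j) * ((x k)^2)^2 / 4
      = ∑ k, (∑ j, C k j) * ((x k)^2)^2 / 8 + ∑ k, (∑ j, C k j) * ((x k)^2)^2 / 8 := by
    rw [← Finset.sum_add_distrib]
    apply Finset.sum_congr rfl
    intro k _; ring
  linear_combination fin


/-- `NN_Q~ ⊆ 2·(PSD_Q~ − PSD_Q~)`. -/
theorem stmt14 (n : ℕ) (hn : 1 ≤ n)
    (σ : Measure (EuclideanSpace ℝ (Fin n)))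
    (hσprob : IsProbabilityMeasure σ)
    (hσsphere : σ (Metric.sphere (0 : EuclideanSpace ℝ (Fin n)) 1) = 1)
    (hσinv : ∀ O : EuclideanSpace ℝ (Fin n) ≃ₗᵢ[ℝ] EuclideanSpace ℝ (Fin n),
      Measure.map (⇑O) σ = σ) :
    sect σ (NNQ n) ⊆
      {h : symSub n | ∃ a ∈ sect σ (PSDQ n), ∃ b ∈ sect σ (PSDQ n),
        h = (2:ℝ) • (a - b)} := by
  classical
  intro h hh
  obtain ⟨hint, hnn⟩ := hh
  have hsph : ∀ᵐ x ∂σ, ‖x‖ = 1 := by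
    have hms : MeasurableSet (Metric.sphere (0 : EuclideanSpace ℝ (Fin n)) 1) :=
      Metric.isClosed_sphere.measurableSet
    have hc : σ (Metric.sphere (0 : EuclideanSpace ℝ (Fin n)) 1)ᶜ = 0 := by
      rw [measure_compl hms (by rw [hσsphere]; exact ENNReal.one_ne_top), measure_univ, hσsphere,
        tsub_self]
    rw [Filter.eventually_iff, mem_ae_iff]
    convert hc using 2
    ext x
    simp [mem_sphere_zero_iff_norm]
  have hcont : ∀ i j : Fin n, Continuous fun x : EuclideanSpace ℝ (Fin n) => (x i)^2 * (x j)^2 := by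
    intro i j
    fun_prop
  have hbd : ∀ (x : EuclideanSpace ℝ (Fin n)), ‖x‖ = 1 → ∀ i : Fin n, (x i)^2 ≤ 1 := by
    intro x hx i
    have h1 : (x i)^2 ≤ ∑ k, (x k)^2 :=
      Finset.single_le_sum (f := fun k => (x k)^2) (fun k _ => sq_nonneg _) (mem_univ i)
    rw [← normsq n x, hx] at h1
    simpa using h1
  have hInt : ∀ i j : Fin n,
      Integrable (fun x : EuclideanSpace ℝ (Fin n) => (x i)^2 * (x j)^2) σ := by
    intro i j
    refine Integrable.mono' (integrable_const 1) (hcont i j).aestronglyMeasurable ?_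
    filter_upwards [hsph] with x hx
    rw [Real.norm_eq_abs, abs_of_nonneg (by positivity)]
    exact mul_le_one₀ (hbd x hx i) (sq_nonneg _) (hbd x hx j)
  set m : Fin n → Fin n → ℝ := fun i j => ∫ x, (x i)^2 * (x j)^2 ∂σ with hm
  have hm0 : ∀ i j, 0 ≤ m i j := fun i j => integral_nonneg (fun x => by positivity)
  have hIq : ∀ a : symSub n, ∫ x, qfun a x ∂σ = ∑ i, ∑ j, a.1 i j * m i j := by
    intro a
    have hint1 : ∀ i j : Fin n,
        Integrable (fun x : EuclideanSpace ℝ (Fin n) => a.1 i j * (x i)^2 * (x j)^2) σ := by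
      intro i j
      simpa [mul_assoc] using (hInt i j).const_mul (a.1 i j)
    show ∫ x, ∑ i, ∑ j, a.1 i j * (x i)^2 * (x j)^2 ∂σ = _
    rw [integral_finset_sum univ (fun i _ => integrable_finset_sum univ (fun j _ => hint1 i j))]
    apply Finset.sum_congr rfl
    intro i _
    rw [integral_finset_sum univ (fun j _ => hint1 i j)]
    apply Finset.sum_congr rfl
    intro j _
    simp_rw [mul_assoc]
    rw [integral_const_mul]
  have hmsum : ∑ i, ∑ j, m i j = 1 := by
    have e : ∫ x, ∑ i, ∑ j, (x i)^2 * (x j)^2 ∂σ = ∑ i, ∑ j, m i j := by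
      rw [integral_finset_sum univ (fun i _ => integrable_finset_sum univ (fun j _ => hInt i j))]
      exact Finset.sum_congr rfl fun i _ => integral_finset_sum univ (fun j _ => hInt i j)
    rw [← e]
    have e2 : ∀ᵐ x ∂σ, ∑ i, ∑ j, (x i)^2 * (x j)^2 = (1:ℝ) := by
      filter_upwards [hsph] with x hx
      have e3 : ∑ i, ∑ j, (x i)^2 * (x j)^2 = (∑ i, (x i)^2) * (∑ j, (x j)^2) := by
        rw [Finset.sum_mul_sum]
      rw [e3, ← normsq n x, hx]
      norm_num
    rw [integral_congr_ae e2]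
    simp
  have h6 : ∀ i j : Fin n, i ≠ j → m i i + m j j = 6 * m i j := by
    intro i j hij
    set O := rot45 n i j hij with hO
    have hmap := hσinv O
    have hmeas : AEStronglyMeasurable (fun x : EuclideanSpace ℝ (Fin n) => (x i)^2 * (x j)^2)
        (Measure.map (⇑O) σ) := by
      rw [hmap]; exact (hcont i j).aestronglyMeasurable
    have h1 : m i j = ∫ x, ((O x) i)^2 * ((O x) j)^2 ∂σ := by
      rw [hm]
      conv_lhs => rw [← hmap]
      exact integral_map O.continuous.measurable.aemeasurable hmeas
    have h2 : ∀ x : EuclideanSpace ℝ (Fin n), ((O x) i)^2 * ((O x) j)^2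
        = (1/4)*((x i)^2*(x i)^2) - (1/2)*((x i)^2*(x j)^2) + (1/4)*((x j)^2*(x j)^2) := by
      intro x
      rw [hO, rot45_apply_i, rot45_apply_j]
      have h2' := sqrt2_sq
      have hne := sqrt2_ne
      field_simp
      rw [show Real.sqrt 2 ^ 4 = (Real.sqrt 2 ^ 2)^2 by ring, h2']
      ring
    simp_rw [h2] at h1
    have I1 : Integrable (fun x : EuclideanSpace ℝ (Fin n) =>
        (1/4)*((x i)^2*(x i)^2) - (1/2)*((x i)^2*(x j)^2)) σ :=
      ((hInt i i).const_mul _).sub ((hInt i j).const_mul _)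
    have I2 : Integrable (fun x : EuclideanSpace ℝ (Fin n) => (1/4)*((x j)^2*(x j)^2)) σ :=
      (hInt j j).const_mul _
    rw [integral_add I1 I2, integral_sub ((hInt i i).const_mul _) ((hInt i j).const_mul _),
      integral_const_mul, integral_const_mul, integral_const_mul] at h1
    have h4 : m i j = (1/4) * m i i - (1/2) * m i j + (1/4) * m j j := h1
    linarith
  set C : Fin n → Fin n → ℝ := fun i j => h.1 i j + 1 with hC
  have hCs : ∀ i j, C i j = C j i := by
    intro i j
    simp only [hC]
    rw [h.2 i j]
  have hC0 : ∀ i j, 0 ≤ C i j := by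
    intro i j
    have := hnn i j
    simpa [rQ] using this
  have hC1 : ∑ i, ∑ j, C i j * m i j = 1 := by
    have h0 : ∑ i, ∑ j, h.1 i j * m i j = 0 := by rw [← hIq h]; exact hint
    have e : ∀ i j : Fin n, C i j * m i j = h.1 i j * m i j + m i j := by
      intro i j; simp only [hC]; ring
    simp_rw [e]
    simp only [Finset.sum_add_distrib]
    rw [h0, hmsum]
    norm_num
  set g : ℝ := ∑ i, C i i * m i i with hg
  have hg0 : 0 ≤ g :=
    Finset.sum_nonneg fun i _ => mul_nonneg (hC0 i i) (hm0 i i)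
  have hSig : ∑ i, (∑ j, C i j) * m i i = 3 - 2*g := by
    have e2 : ∑ i, ∑ j, (C i j * (m i i + m j j) - 6*(C i j * m i j))
        = ∑ i, (-4) * (C i i * m i i) := by
      apply Finset.sum_congr rfl
      intro i _
      rw [Finset.sum_eq_single i (fun j _ hj => by rw [h6 i j (Ne.symm hj)]; ring) (by simp)]
      ring
    have e3 : ∑ i, ∑ j, C i j * (m i i + m j j) = 2 * ∑ i, (∑ j, C i j) * m i i := by
      have l1 : ∑ i, ∑ j, C i j * m i i = ∑ i, (∑ j, C i j) * m i i := by
        apply Finset.sum_congr rfl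
        intro i _
        rw [Finset.sum_mul]
      have r1 : ∑ i, ∑ j, C i j * m j j = ∑ i, (∑ j, C i j) * m i i := by
        rw [Finset.sum_comm]
        apply Finset.sum_congr rfl
        intro j _
        rw [Finset.sum_mul]
        apply Finset.sum_congr rfl
        intro i _
        rw [hCs i j]
      have e5 : ∀ i j : Fin n, C i j * (m i i + m j j) = C i j * m i i + C i j * m j j := by
        intro i j; ring
      simp_rw [e5]
      simp only [Finset.sum_add_distrib]
      rw [l1, r1]
      ring
    have e4 : ∑ i, ∑ j, 6 * (C i j * m i j) = 6 := by
      simp_rw [← Finset.mul_sum]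
      rw [hC1]
      norm_num
    have e5 : ∑ i, (-4) * (C i i * m i i) = -4 * g := by
      rw [← Finset.mul_sum]
    have e6 : ∑ i, ∑ j, (C i j * (m i i + m j j) - 6*(C i j * m i j))
        = ∑ i, ∑ j, C i j * (m i i + m j j) - ∑ i, ∑ j, 6 * (C i j * m i j) := by
      simp only [Finset.sum_sub_distrib]
    rw [e6, e3, e4, e5] at e2
    linarith
  have hsum_int : ∀ (ε' τ' : ℝ),
      ∑ k, ∑ l, ((if k = l then ∑ j, C k j else 0)/4 + ε' * C k l/4 + τ') * m k l
        = (3 - 2*g)/4 + ε'/4 + τ' := by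
    intro ε' τ'
    have split : ∀ k l : Fin n, ((if k = l then ∑ j, C k j else 0)/4 + ε' * C k l/4 + τ') * m k l
        = (if k = l then (∑ j, C k j) * m k l / 4 else 0)
          + (ε'/4) * (C k l * m k l) + τ' * m k l := by
      intro k l
      rcases eq_or_ne k l with rfl | hkl
      · rw [if_pos (rfl : k = k), if_pos (rfl : k = k)]; ring
      · simp only [if_neg hkl]; ring
    simp_rw [split]
    simp only [Finset.sum_add_distrib]
    have p1 : ∑ k, ∑ l, (if k = l then (∑ j, C k j) * m k l / 4 else 0)
        = (∑ k, (∑ j, C k j) * m k k)/4 := by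
      rw [Finset.sum_div]
      apply Finset.sum_congr rfl
      intro k _
      rw [Finset.sum_ite_eq univ k (fun l => (∑ j, C k j) * m k l / 4),
        if_pos (Finset.mem_univ k)]
    have p2 : ∑ k, ∑ l, (ε'/4) * (C k l * m k l) = ε'/4 := by
      simp_rw [← Finset.mul_sum]
      rw [hC1, mul_one]
    have p3 : ∑ k, ∑ l, τ' * m k l = τ' := by
      simp_rw [← Finset.mul_sum]
      rw [hmsum, mul_one]
    rw [p1, p2, p3, hSig]
  set Am : symSub n := ⟨fun k l => (if k = l then ∑ j, C k j else 0)/4 + 1 * C k l/4 + g/2,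
    by
      intro k l
      rcases eq_or_ne k l with rfl | hkl
      · rfl
      · simp [hkl, Ne.symm hkl, hCs k l]⟩ with hAm
  set Bm : symSub n := ⟨fun k l => (if k = l then ∑ j, C k j else 0)/4 + (-1) * C k l/4 + (1+g)/2,
    by
      intro k l
      rcases eq_or_ne k l with rfl | hkl
      · rfl
      · simp [hkl, Ne.symm hkl, hCs k l]⟩ with hBm
  have hAmem : Am ∈ PSDQ n :=
    psd_rep C hCs hC0 (g/2) (by linarith) 1 (by norm_num) Am (fun k l => rfl)
  have hBmem : Bm ∈ PSDQ n :=
    psd_rep C hCs hC0 ((1+g)/2) (by linarith) (-1) (by norm_num) Bm (fun k l => rfl)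
  refine ⟨Am - rQ n, ⟨?_, ?_⟩, Bm - rQ n, ⟨?_, ?_⟩, ?_⟩
  · rw [hIq]
    have hsplit : ∀ k l : Fin n, (Am - rQ n).1 k l * m k l = Am.1 k l * m k l - m k l := by
      intro k l
      have e : (Am - rQ n).1 k l = Am.1 k l - 1 := rfl
      rw [e]; ring
    simp_rw [hsplit]
    simp only [Finset.sum_sub_distrib]
    rw [hmsum]
    have hA1 : ∑ k, ∑ l, Am.1 k l * m k l = (3 - 2*g)/4 + 1/4 + g/2 := by
      have e := hsum_int 1 (g/2)
      convert e using 4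
    rw [hA1]
    ring
  · rw [sub_add_cancel]; exact hAmem
  · rw [hIq]
    have hsplit : ∀ k l : Fin n, (Bm - rQ n).1 k l * m k l = Bm.1 k l * m k l - m k l := by
      intro k l
      have e : (Bm - rQ n).1 k l = Bm.1 k l - 1 := rfl
      rw [e]; ring
    simp_rw [hsplit]
    simp only [Finset.sum_sub_distrib]
    rw [hmsum]
    have hB1 : ∑ k, ∑ l, Bm.1 k l * m k l = (3 - 2*g)/4 + (-1)/4 + (1+g)/2 := by
      have e := hsum_int (-1) ((1+g)/2)
      convert e using 4
    rw [hB1]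
    ring
  · rw [sub_add_cancel]; exact hBmem
  · apply Subtype.ext
    funext k l
    have e : ((2:ℝ) • (Am - rQ n - (Bm - rQ n))).1 k l
        = 2 * (Am.1 k l - Bm.1 k l) := by
      show (2:ℝ) * ((Am.1 k l - 1) - (Bm.1 k l - 1)) = _
      ring
    show h.1 k l = ((2:ℝ) • (Am - rQ n - (Bm - rQ n))).1 k l
    rw [e]
    show h.1 k l = 2 * (((if k = l then ∑ j, C k j else 0)/4 + 1 * C k l/4 + g/2)
      - ((if k = l then ∑ j, C k j else 0)/4 + (-1) * C k l/4 + (1+g)/2))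
    have eC : C k l = h.1 k l + 1 := rfl
    rw [eC]
    ring
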